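/- Let f : [0,1] → ℝ be continuously differentiable and monotonically nondecreasing, with ∫₀¹ (t − 2/3)·f(t) dt = 0. Define p(x) = (1/(1−3x)³)·( f(1) − 4·f(0) − ∫₀^x (1−3t)²·(f'(1−t) + 8·f'(2t)) dt ) for x ∈ [0, 1/3). Then p(x) ≥ 0 for all x ∈ [0, 1/3), and p(x) → f'(2/3) as x → 1/3 from the left. -/

import Mathlib

open Set intervalIntegral Filter
open MeasureTheory

-- f' nonneg on Icc 0 1
lemma aux_fprime_nonneg (f f' : ℝ → ℝ)
    (hderiv : ∀ x ∈ Set.Icc (0 : ℝ) 1, HasDerivWithinAt f (f' x) (Set.Icc (0 : ℝ) 1) x)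
    (hmono : MonotoneOn f (Set.Icc (0 : ℝ) 1)) :
    ∀ x ∈ Set.Icc (0 : ℝ) 1, 0 ≤ f' x := by
  intro x hx
  have hslope := hasDerivWithinAt_iff_tendsto_slope.1 (hderiv x hx)
  rcases lt_or_eq_of_le hx.2 with hx1 | hx1
  · -- use points above x
    have hsub : Set.Ioo x 1 ⊆ Set.Icc (0:ℝ) 1 \ {x} := by
      intro y hy
      exact ⟨⟨le_trans hx.1 hy.1.le, hy.2.le⟩, by simp [ne_of_gt hy.1]⟩
    have hmem : x ∈ closure (Set.Ioo x 1) := by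
      rw [closure_Ioo (ne_of_lt hx1)]; exact ⟨le_refl x, hx1.le⟩
    have hne : (nhdsWithin x (Set.Ioo x 1)).NeBot :=
      mem_closure_iff_nhdsWithin_neBot.1 hmem
    have ht : Tendsto (slope f x) (nhdsWithin x (Set.Ioo x 1)) (nhds (f' x)) :=
      hslope.mono_left (nhdsWithin_mono x hsub)
    refine ge_of_tendsto ht ?_
    filter_upwards [self_mem_nhdsWithin] with y hy
    have h1 : f x ≤ f y := hmono hx ⟨le_trans hx.1 hy.1.le, hy.2.le⟩ hy.1.le
    have h2 : (0:ℝ) < y - x := by linarith [hy.1]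
    rw [slope_def_field]
    exact div_nonneg (by linarith) h2.le
  · -- x = 1, use points below
    have hsub : Set.Ioo (0:ℝ) 1 ⊆ Set.Icc (0:ℝ) 1 \ {x} := by
      intro y hy
      exact ⟨⟨hy.1.le, hy.2.le⟩, by simp [hx1 ▸ ne_of_lt hy.2]⟩
    have hmem : x ∈ closure (Set.Ioo (0:ℝ) 1) := by
      rw [closure_Ioo (by norm_num : (0:ℝ) ≠ 1)]; exact hx
    have hne : (nhdsWithin x (Set.Ioo (0:ℝ) 1)).NeBot :=
      mem_closure_iff_nhdsWithin_neBot.1 hmem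
    have ht : Tendsto (slope f x) (nhdsWithin x (Set.Ioo (0:ℝ) 1)) (nhds (f' x)) :=
      hslope.mono_left (nhdsWithin_mono x hsub)
    refine ge_of_tendsto ht ?_
    filter_upwards [self_mem_nhdsWithin] with y hy
    have h1 : f y ≤ f x := hmono ⟨hy.1.le, hy.2.le⟩ hx (hx1 ▸ hy.2.le)
    have h2 : y - x < 0 := by rw [hx1]; linarith [hy.2]
    rw [slope_def_field]
    exact div_nonneg_of_nonpos (by linarith) h2.le

-- integrability of G on subintervals of [0,1]
lemma aux_intG (f' : ℝ → ℝ) (hf'cont : ContinuousOn f' (Set.Icc (0 : ℝ) 1))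
    {a b : ℝ} (ha : a ∈ Set.Icc (0:ℝ) 1) (hb : b ∈ Set.Icc (0:ℝ) 1) :
    IntervalIntegrable (fun u => (3*u - 2)^2 * f' u) volume a b := by
  apply ContinuousOn.intervalIntegrable
  have hsub : Set.uIcc a b ⊆ Set.Icc (0:ℝ) 1 := Set.uIcc_subset_Icc ha hb
  exact ((continuous_const.mul continuous_id').sub continuous_const).pow 2
    |>.continuousOn.mul (hf'cont.mono hsub)

-- f 1 - 4 f 0 = ∫₀¹ (3u-2)² f'
lemma aux_ibp (f f' : ℝ → ℝ)
    (hderiv : ∀ x ∈ Set.Icc (0 : ℝ) 1, HasDerivWithinAt f (f' x) (Set.Icc (0 : ℝ) 1) x)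
    (hf'cont : ContinuousOn f' (Set.Icc (0 : ℝ) 1))
    (hint : (∫ t in (0 : ℝ)..1, (t - 2/3) * f t) = 0) :
    f 1 - 4 * f 0 = ∫ u in (0:ℝ)..1, (3*u - 2)^2 * f' u := by
  have huIcc : Set.uIcc (0:ℝ) 1 = Set.Icc (0:ℝ) 1 := Set.uIcc_of_le (by norm_num)
  have hu : ∀ t ∈ Set.uIcc (0:ℝ) 1,
      HasDerivWithinAt (fun t : ℝ => (3*t - 2)^2 / 18) (t - 2/3) (Set.uIcc (0:ℝ) 1) t := by
    intro t _
    have h1 : HasDerivAt (fun t : ℝ => (3*t - 2)^2 / 18) (t - 2/3) t := by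
      have h2 := ((((hasDerivAt_id t).const_mul (3:ℝ)).sub_const 2).pow 2).div_const 18
      refine h2.congr_deriv ?_
      simp only [id_eq]
      push_cast
      ring
    exact h1.hasDerivWithinAt
  have hv : ∀ t ∈ Set.uIcc (0:ℝ) 1, HasDerivWithinAt f (f' t) (Set.uIcc (0:ℝ) 1) t := by
    rw [huIcc]; exact hderiv
  have hu' : IntervalIntegrable (fun t : ℝ => t - 2/3) volume 0 1 :=
    (continuous_id'.sub continuous_const).intervalIntegrable 0 1
  have hv' : IntervalIntegrable f' volume 0 1 := by
    apply ContinuousOn.intervalIntegrable; rw [huIcc]; exact hf'cont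
  have key := intervalIntegral.integral_mul_deriv_eq_deriv_mul_of_hasDerivWithinAt hu hv hu' hv'
  -- key : ∫ t in 0..1, (3t-2)²/18 * f' t = (3·1-2)²/18 * f 1 - (3·0-2)²/18 * f 0 - ∫ (t-2/3) f t
  rw [hint] at key
  have h18 : (∫ u in (0:ℝ)..1, (3*u - 2)^2 * f' u)
      = 18 * ∫ t in (0:ℝ)..1, (3*t - 2)^2 / 18 * f' t := by
    rw [← intervalIntegral.integral_const_mul]
    congr 1; funext t; ring
  rw [h18, key]
  norm_num
  ring

-- key identity
lemma aux_key (f f' : ℝ → ℝ)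
    (hderiv : ∀ x ∈ Set.Icc (0 : ℝ) 1, HasDerivWithinAt f (f' x) (Set.Icc (0 : ℝ) 1) x)
    (hf'cont : ContinuousOn f' (Set.Icc (0 : ℝ) 1))
    (hint : (∫ t in (0 : ℝ)..1, (t - 2/3) * f t) = 0)
    {x : ℝ} (hx : x ∈ Set.Ico (0:ℝ) (1/3)) :
    f 1 - 4 * f 0 - (∫ t in (0 : ℝ)..x, (1 - 3*t)^2 * (f' (1 - t) + 8 * f' (2*t)))
      = ∫ u in (2*x)..(1 - x), (3*u - 2)^2 * f' u := by
  obtain ⟨hx0, hx3⟩ := hx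
  have hx1 : x ≤ 1 := by linarith
  have huIcc : Set.uIcc (0:ℝ) x = Set.Icc (0:ℝ) x := Set.uIcc_of_le hx0
  -- integrability of the two pieces on [0, x]
  have hi1 : IntervalIntegrable (fun t => (1 - 3*t)^2 * f' (1 - t)) volume 0 x := by
    apply ContinuousOn.intervalIntegrable
    rw [huIcc]
    apply ContinuousOn.mul
    · exact (((continuous_const.sub (continuous_const.mul continuous_id')).pow 2)).continuousOn
    · apply hf'cont.comp (continuous_const.sub continuous_id').continuousOn
      intro t ht
      simp only [Set.mem_Icc, id_eq, Pi.sub_apply, Pi.mul_apply] at ht ⊢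
      constructor
      · linarith [ht.2]
      · linarith [ht.1]
  have hi2 : IntervalIntegrable (fun t => (1 - 3*t)^2 * (8 * f' (2*t))) volume 0 x := by
    apply ContinuousOn.intervalIntegrable
    rw [huIcc]
    have hcomp : ContinuousOn (fun t : ℝ => f' (2*t)) (Set.Icc 0 x) := by
      apply hf'cont.comp (continuous_const.mul continuous_id').continuousOn
      intro t ht
      simp only [Set.mem_Icc, id_eq, Pi.sub_apply, Pi.mul_apply] at ht ⊢
      constructor
      · linarith [ht.1]
      · linarith [ht.2]
    exact (((continuous_const.sub (continuous_const.mul continuous_id')).pow 2)).continuousOn.mul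
      (continuousOn_const.mul hcomp)
  -- split
  have hsplit : (∫ t in (0 : ℝ)..x, (1 - 3*t)^2 * (f' (1 - t) + 8 * f' (2*t)))
      = (∫ t in (0 : ℝ)..x, (1 - 3*t)^2 * f' (1 - t))
        + ∫ t in (0 : ℝ)..x, (1 - 3*t)^2 * (8 * f' (2*t)) := by
    rw [← intervalIntegral.integral_add hi1 hi2]
    congr 1; funext t; ring
  -- first substitution: t ↦ 1 - t
  have hA1 : (∫ t in (0 : ℝ)..x, (1 - 3*t)^2 * f' (1 - t))
      = ∫ u in (1 - x)..1, (3*u - 2)^2 * f' u := by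
    have := intervalIntegral.integral_comp_sub_left (a := 0) (b := x)
      (fun u => (3*u - 2)^2 * f' u) 1
    simp only [sub_zero] at this
    rw [← this]
    congr 1; funext t; ring_nf
  -- second substitution: t ↦ 2t
  have hA2 : (∫ t in (0 : ℝ)..x, (1 - 3*t)^2 * (8 * f' (2*t)))
      = ∫ u in (0:ℝ)..(2*x), (3*u - 2)^2 * f' u := by
    have h := intervalIntegral.integral_comp_mul_left (a := 0) (b := x)
      (fun u => (3*u - 2)^2 * f' u) (two_ne_zero)
    simp only [mul_zero] at h
    have h2 : (∫ t in (0 : ℝ)..x, (1 - 3*t)^2 * (8 * f' (2*t)))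
        = 2 * ∫ t in (0:ℝ)..x, (3*(2*t) - 2)^2 * f' (2*t) := by
      rw [← intervalIntegral.integral_const_mul]
      congr 1; funext t; ring
    rw [h2, h, smul_eq_mul]
    ring
  -- splitting [0,1] into three parts
  have m0 : (0:ℝ) ∈ Set.Icc (0:ℝ) 1 := by norm_num
  have m1 : (1:ℝ) ∈ Set.Icc (0:ℝ) 1 := by norm_num
  have m2x : 2*x ∈ Set.Icc (0:ℝ) 1 := by constructor <;> linarith
  have m1x : 1 - x ∈ Set.Icc (0:ℝ) 1 := by constructor <;> linarith
  have hadd1 : (∫ u in (0:ℝ)..(2*x), (3*u - 2)^2 * f' u)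
      + (∫ u in (2*x)..(1-x), (3*u - 2)^2 * f' u) = ∫ u in (0:ℝ)..(1-x), (3*u - 2)^2 * f' u :=
    intervalIntegral.integral_add_adjacent_intervals
      (aux_intG f' hf'cont m0 m2x) (aux_intG f' hf'cont m2x m1x)
  have hadd2 : (∫ u in (0:ℝ)..(1-x), (3*u - 2)^2 * f' u)
      + (∫ u in (1-x)..1, (3*u - 2)^2 * f' u) = ∫ u in (0:ℝ)..1, (3*u - 2)^2 * f' u :=
    intervalIntegral.integral_add_adjacent_intervals
      (aux_intG f' hf'cont m0 m1x) (aux_intG f' hf'cont m1x m1)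
  have hibp := aux_ibp f f' hderiv hf'cont hint
  rw [hsplit, hA1, hA2, hibp]
  linarith

-- weight integral
lemma aux_weight (x : ℝ) :
    (∫ u in (2*x)..(1 - x), (3*u - 2)^2) = (1 - 3*x)^3 := by
  have h : ∀ u : ℝ, HasDerivAt (fun u : ℝ => (3*u - 2)^3 / 9) ((3*u - 2)^2) u := by
    intro u
    have h2 := ((((hasDerivAt_id u).const_mul (3:ℝ)).sub_const 2).pow 3).div_const 9
    refine h2.congr_deriv ?_
    simp only [id_eq]
    push_cast
    ring
  rw [intervalIntegral.integral_eq_sub_of_hasDerivAt (fun u _ => h u)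
    ((by continuity : Continuous fun u : ℝ => (3*u - 2)^2).intervalIntegrable _ _)]
  ring


/-- For a continuously differentiable nondecreasing `f : [0,1] → ℝ` with
`∫₀¹ (t − 2/3) f(t) dt = 0`, the function
`p(x) = (1/(1−3x)³)·(f(1) − 4f(0) − ∫₀^x (1−3t)²(f'(1−t) + 8f'(2t)) dt)`
is nonnegative on `[0, 1/3)` and tends to `f'(2/3)` as `x → 1/3⁻`. -/
theorem p_nonneg_and_limit (f f' : ℝ → ℝ)
    (hderiv : ∀ x ∈ Set.Icc (0 : ℝ) 1, HasDerivWithinAt f (f' x) (Set.Icc (0 : ℝ) 1) x)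
    (hf'cont : ContinuousOn f' (Set.Icc (0 : ℝ) 1))
    (hmono : MonotoneOn f (Set.Icc (0 : ℝ) 1))
    (hint : (∫ t in (0 : ℝ)..1, (t - 2/3) * f t) = 0) :
    (∀ x ∈ Set.Ico (0 : ℝ) (1/3),
      0 ≤ (1 / (1 - 3*x)^3) *
        (f 1 - 4 * f 0 - ∫ t in (0 : ℝ)..x, (1 - 3*t)^2 * (f' (1 - t) + 8 * f' (2*t)))) ∧
    Tendsto (fun x : ℝ => (1 / (1 - 3*x)^3) *
        (f 1 - 4 * f 0 - ∫ t in (0 : ℝ)..x, (1 - 3*t)^2 * (f' (1 - t) + 8 * f' (2*t))))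
      (nhdsWithin (1/3 : ℝ) (Set.Iio (1/3 : ℝ))) (nhds (f' (2/3))) := by
  constructor
  · intro x hx
    rw [aux_key f f' hderiv hf'cont hint hx]
    have h3 : 0 < 1 - 3*x := by linarith [hx.2]
    apply mul_nonneg (by positivity)
    apply intervalIntegral.integral_nonneg (by linarith [hx.2] : 2*x ≤ 1 - x)
    intro u hu
    have hu01 : u ∈ Set.Icc (0:ℝ) 1 := ⟨by linarith [hu.1, hx.1], by linarith [hu.2, hx.1]⟩
    exact mul_nonneg (sq_nonneg _) (aux_fprime_nonneg f f' hderiv hmono u hu01)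
  · rw [Metric.tendsto_nhdsWithin_nhds]
    intro ε hε
    have hc : ContinuousWithinAt f' (Set.Icc (0:ℝ) 1) (2/3) :=
      hf'cont (2/3) (by norm_num)
    rw [Metric.continuousWithinAt_iff] at hc
    obtain ⟨δ₁, hδ₁, hδ⟩ := hc (ε/2) (by linarith)
    refine ⟨min (δ₁/2) (1/6), by positivity, ?_⟩
    intro x hxIio hxd
    have hx3 : x < 1/3 := hxIio
    rw [Real.dist_eq] at hxd
    have hd1 : |x - 1/3| < δ₁/2 := lt_of_lt_of_le hxd (min_le_left _ _)
    have hd2 : |x - 1/3| < 1/6 := lt_of_lt_of_le hxd (min_le_right _ _)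
    rw [abs_lt] at hd1 hd2
    have hx6 : 1/6 < x := by linarith [hd2.1]
    have hxI : x ∈ Set.Ico (0:ℝ) (1/3) := ⟨by linarith, hx3⟩
    have h3 : (0:ℝ) < 1 - 3*x := by linarith
    rw [Real.dist_eq, aux_key f f' hderiv hf'cont hint hxI]
    set c := f' (2/3) with hc_def
    have m2x : 2*x ∈ Set.Icc (0:ℝ) 1 := ⟨by linarith, by linarith⟩
    have m1x : 1 - x ∈ Set.Icc (0:ℝ) 1 := ⟨by linarith, by linarith⟩
    have hiG := aux_intG f' hf'cont m2x m1x
    have hiW : IntervalIntegrable (fun u : ℝ => (3*u - 2)^2) volume (2*x) (1 - x) :=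
      (by continuity : Continuous fun u : ℝ => (3*u - 2)^2).intervalIntegrable _ _
    have hiWc : IntervalIntegrable (fun u : ℝ => (3*u - 2)^2 * c) volume (2*x) (1 - x) :=
      hiW.mul_const c
    have hiD : IntervalIntegrable (fun u : ℝ => (3*u - 2)^2 * (f' u - c)) volume (2*x) (1 - x) := by
      simp only [mul_sub]
      exact hiG.sub hiWc
    have hdiff : (1 / (1 - 3*x)^3) * (∫ u in (2*x)..(1 - x), (3*u - 2)^2 * f' u) - c
        = (1 / (1 - 3*x)^3) * ∫ u in (2*x)..(1 - x), (3*u - 2)^2 * (f' u - c) := by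
      have hs : (∫ u in (2*x)..(1 - x), (3*u - 2)^2 * (f' u - c))
          = (∫ u in (2*x)..(1 - x), (3*u - 2)^2 * f' u)
            - ∫ u in (2*x)..(1 - x), (3*u - 2)^2 * c := by
        rw [← intervalIntegral.integral_sub hiG hiWc]
        congr 1; funext u; ring
      rw [hs, intervalIntegral.integral_mul_const, aux_weight]
      have h3ne : (1 - 3*x)^3 ≠ 0 := by positivity
      field_simp
    rw [hdiff]
    have hab : 2*x ≤ 1 - x := by linarith
    have hb1 : |∫ u in (2*x)..(1 - x), (3*u - 2)^2 * (f' u - c)|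
        ≤ ∫ u in (2*x)..(1 - x), (3*u - 2)^2 * (ε/2) := by
      calc |∫ u in (2*x)..(1 - x), (3*u - 2)^2 * (f' u - c)|
          ≤ ∫ u in (2*x)..(1 - x), |(3*u - 2)^2 * (f' u - c)| :=
            intervalIntegral.abs_integral_le_integral_abs hab
        _ ≤ ∫ u in (2*x)..(1 - x), (3*u - 2)^2 * (ε/2) := by
            apply intervalIntegral.integral_mono_on hab hiD.abs
              (hiW.mul_const (ε/2))
            intro u hu
            have hu01 : u ∈ Set.Icc (0:ℝ) 1 := ⟨by linarith [hu.1], by linarith [hu.2]⟩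
            have hud : dist u (2/3) < δ₁ := by
              rw [Real.dist_eq, abs_lt]
              constructor
              · linarith [hu.1, hd1.1]
              · linarith [hu.2, hd1.1]
            have := hδ hu01 hud
            rw [Real.dist_eq] at this
            rw [abs_mul, abs_of_nonneg (sq_nonneg (3*u - 2))]
            exact mul_le_mul_of_nonneg_left (le_of_lt this) (sq_nonneg _)
    rw [intervalIntegral.integral_mul_const, aux_weight] at hb1
    calc |(1 / (1 - 3*x)^3) * ∫ u in (2*x)..(1 - x), (3*u - 2)^2 * (f' u - c)|
        = (1 / (1 - 3*x)^3) * |∫ u in (2*x)..(1 - x), (3*u - 2)^2 * (f' u - c)| := by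
          rw [abs_mul, abs_of_pos (by positivity : (0:ℝ) < 1 / (1 - 3*x)^3)]
      _ ≤ (1 / (1 - 3*x)^3) * ((1 - 3*x)^3 * (ε/2)) :=
          mul_le_mul_of_nonneg_left hb1 (by positivity)
      _ = ε/2 := by field_simp
      _ < ε := by linarith
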